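/- For any compact metric space X, the limit xt(X) := lim_{q→∞} xt_q(X) exists and satisfies (1/2)·diam(X) ≤ xt(X) ≤ diam(X). -/

import Mathlib

open Metric

/-- Average pairwise distance of a `q`-tuple. -/
noncomputable def avgDist {X : Type*} [MetricSpace X] {q : ℕ} (x : Fin q → X) : ℝ :=
  (∑ i : Fin q, ∑ j : Fin q, if i < j then dist (x i) (x j) else 0) / (q.choose 2)

/-- The `q`-extent of a metric space: supremum of average pairwise distances. -/
noncomputable def extent (X : Type*) [MetricSpace X] (q : ℕ) : ℝ :=
  sSup (Set.range (fun x : Fin q → X => avgDist x))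

section Aux

variable {X : Type*} [MetricSpace X]

/-- The full symmetric sum of pairwise distances. -/
noncomputable def sumD {q : ℕ} (x : Fin q → X) : ℝ :=
  ∑ i : Fin q, ∑ j : Fin q, dist (x i) (x j)

lemma half_sum {q : ℕ} (x : Fin q → X) :
    (∑ i : Fin q, ∑ j : Fin q, if i < j then dist (x i) (x j) else 0) * 2 = sumD x := by
  have h2 : (∑ i : Fin q, ∑ j : Fin q, if i < j then dist (x i) (x j) else 0)
      = ∑ i : Fin q, ∑ j : Fin q, if j < i then dist (x i) (x j) else 0 := by
    rw [Finset.sum_comm]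
    refine Finset.sum_congr rfl fun i _ => Finset.sum_congr rfl fun j _ => ?_
    rw [dist_comm]
  rw [mul_two]
  nth_rewrite 2 [h2]
  rw [← Finset.sum_add_distrib]
  unfold sumD
  refine Finset.sum_congr rfl fun i _ => ?_
  rw [← Finset.sum_add_distrib]
  refine Finset.sum_congr rfl fun j _ => ?_
  rcases lt_trichotomy i j with h | h | h
  · rw [if_pos h, if_neg (asymm h), add_zero]
  · subst h; simp
  · rw [if_neg (asymm h), if_pos h, zero_add]

lemma avgDist_eq_sumD {q : ℕ} (hq : 2 ≤ q) (x : Fin q → X) :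
    avgDist x = sumD x / (q * (q - 1)) := by
  have h := half_sum x
  have hq1 : (1 : ℝ) ≤ (q : ℝ) := by exact_mod_cast Nat.one_le_of_lt hq
  have hq0 : (q : ℝ) ≠ 0 := by positivity
  have hq1' : (q : ℝ) - 1 ≠ 0 := by
    have : (1 : ℝ) < (q : ℝ) := by exact_mod_cast hq.trans_lt' one_lt_two
    linarith
  unfold avgDist
  rw [Nat.cast_choose_two, ← h]
  field_simp
  try ring

lemma sumD_nonneg {q : ℕ} (x : Fin q → X) : 0 ≤ sumD x :=
  Finset.sum_nonneg fun _ _ => Finset.sum_nonneg fun _ _ => dist_nonneg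

lemma sumD_le [CompactSpace X] {q : ℕ} (x : Fin q → X) :
    sumD x ≤ q * (q - 1) * diam (Set.univ : Set X) := by
  have hb : Bornology.IsBounded (Set.univ : Set X) := isCompact_univ.isBounded
  have hD : 0 ≤ diam (Set.univ : Set X) := diam_nonneg
  have : sumD x ≤ ∑ i : Fin q, ∑ j : Fin q,
      (if i = j then 0 else diam (Set.univ : Set X)) := by
    refine Finset.sum_le_sum fun i _ => Finset.sum_le_sum fun j _ => ?_
    by_cases h : i = j
    · subst h; simp
    · rw [if_neg h]
      exact dist_le_diam_of_mem hb (Set.mem_univ _) (Set.mem_univ _)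
  refine this.trans (le_of_eq ?_)
  have : ∀ i : Fin q, (∑ j : Fin q, if i = j then 0 else diam (Set.univ : Set X))
      = q * diam (Set.univ : Set X) - diam (Set.univ : Set X) := by
    intro i
    have : (∑ j : Fin q, if i = j then (0 : ℝ) else diam (Set.univ : Set X))
        = ∑ j : Fin q, (diam (Set.univ : Set X)
            - if i = j then diam (Set.univ : Set X) else 0) := by
      refine Finset.sum_congr rfl fun j _ => ?_
      by_cases h : i = j <;> simp [h]
    rw [this, Finset.sum_sub_distrib, Finset.sum_const, Finset.sum_ite_eq,
      if_pos (Finset.mem_univ i)]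
    simp [mul_comm]
  rw [Finset.sum_congr rfl fun i _ => this i, Finset.sum_const]
  simp [Finset.card_univ]
  ring

lemma avgDist_le_diam [CompactSpace X] {q : ℕ} (x : Fin q → X) :
    avgDist x ≤ diam (Set.univ : Set X) := by
  have hD : 0 ≤ diam (Set.univ : Set X) := diam_nonneg
  rcases lt_or_ge q 2 with hq | hq
  · interval_cases q
    · simpa [avgDist] using hD
    · simpa [avgDist] using hD
  · rw [avgDist_eq_sumD hq x]
    have hpos : (0 : ℝ) < q * (q - 1) := by
      have h2 : (2 : ℝ) ≤ (q : ℝ) := by exact_mod_cast hq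
      nlinarith
    rw [div_le_iff₀ hpos]
    calc sumD x ≤ q * (q - 1) * diam (Set.univ : Set X) := sumD_le x
      _ = diam (Set.univ : Set X) * (q * (q - 1)) := by ring

lemma sumD_succAbove {q : ℕ} (x : Fin (q + 1) → X) (k : Fin (q + 1)) :
    sumD (x ∘ k.succAbove) = sumD x - 2 * ∑ j : Fin (q + 1), dist (x k) (x j) := by
  have hrow : ∀ f : Fin (q + 1) → ℝ, ∑ i : Fin q, f (k.succAbove i) = (∑ i, f i) - f k := by
    intro f
    rw [Fin.sum_univ_succAbove f k]
    ring
  unfold sumD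
  have h1 : ∀ i : Fin (q + 1), ∑ j : Fin q, dist (x i) ((x ∘ k.succAbove) j)
      = (∑ j, dist (x i) (x j)) - dist (x i) (x k) :=
    fun i => hrow (fun j => dist (x i) (x j))
  calc ∑ i : Fin q, ∑ j : Fin q, dist ((x ∘ k.succAbove) i) ((x ∘ k.succAbove) j)
      = ∑ i : Fin q, ((∑ j, dist ((x ∘ k.succAbove) i) (x j))
          - dist ((x ∘ k.succAbove) i) (x k)) := by
        refine Finset.sum_congr rfl fun i _ => h1 (k.succAbove i)
    _ = (∑ i : Fin (q + 1), ((∑ j, dist (x i) (x j)) - dist (x i) (x k)))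
          - ((∑ j, dist (x k) (x j)) - dist (x k) (x k)) :=
        hrow (fun i => (∑ j, dist (x i) (x j)) - dist (x i) (x k))
    _ = (∑ i : Fin (q + 1), ∑ j, dist (x i) (x j)) - 2 * ∑ j, dist (x k) (x j) := by
        rw [Finset.sum_sub_distrib, dist_self]
        have : ∑ i : Fin (q + 1), dist (x i) (x k) = ∑ j, dist (x k) (x j) := by
          refine Finset.sum_congr rfl fun i _ => dist_comm _ _
        rw [this]
        ring

lemma exists_remove {q : ℕ} (hq : 2 ≤ q) (x : Fin (q + 1) → X) :
    ∃ k : Fin (q + 1), avgDist x ≤ avgDist (x ∘ k.succAbove) := by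
  set S := sumD x with hS
  have hsum : ∑ k : Fin (q + 1), sumD (x ∘ k.succAbove) = (q - 1 : ℝ) * S := by
    have : ∑ k : Fin (q + 1), sumD (x ∘ k.succAbove)
        = ∑ k : Fin (q + 1), (S - 2 * ∑ j : Fin (q + 1), dist (x k) (x j)) :=
      Finset.sum_congr rfl fun k _ => sumD_succAbove x k
    rw [this, Finset.sum_sub_distrib, Finset.sum_const, ← Finset.mul_sum]
    have : ∑ k : Fin (q + 1), ∑ j : Fin (q + 1), dist (x k) (x j) = S := rfl
    rw [this]
    simp [Finset.card_univ]
    try ring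
  have hconst : ∑ _k : Fin (q + 1), ((q - 1 : ℝ) * S / (q + 1))
      = (q - 1 : ℝ) * S := by
    rw [Finset.sum_const, Finset.card_univ, Fintype.card_fin, nsmul_eq_mul]
    push_cast
    have : ((q : ℝ) + 1) ≠ 0 := by positivity
    field_simp
    try ring
  obtain ⟨k, -, hk⟩ := Finset.exists_le_of_sum_le Finset.univ_nonempty
    (le_of_eq (hconst.trans hsum.symm))
  refine ⟨k, ?_⟩
  have hq2 : (2 : ℝ) ≤ (q : ℝ) := by exact_mod_cast hq
  rw [avgDist_eq_sumD (by omega) x, avgDist_eq_sumD hq (x ∘ k.succAbove)]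
  push_cast
  have h1 : (0 : ℝ) < (q : ℝ) * ((q : ℝ) - 1) := by nlinarith
  have h2 : (0 : ℝ) < (q : ℝ) + 1 := by positivity
  rw [div_le_div_iff₀ (by nlinarith) h1]
  have hk' : (q - 1 : ℝ) * S ≤ sumD (x ∘ k.succAbove) * ((q : ℝ) + 1) :=
    (div_le_iff₀ h2).mp hk
  nlinarith [mul_le_mul_of_nonneg_left hk' (show (0 : ℝ) ≤ (q : ℝ) by positivity)]

lemma exists_diam_pair [CompactSpace X] [Nonempty X] :
    ∃ a b : X, dist a b = diam (Set.univ : Set X) := by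
  have hc : IsCompact (Set.univ : Set (X × X)) := isCompact_univ
  obtain ⟨⟨a, b⟩, -, hmax⟩ := hc.exists_isMaxOn (Set.univ_nonempty)
    (continuous_dist.continuousOn (s := Set.univ))
  refine ⟨a, b, le_antisymm ?_ ?_⟩
  · exact dist_le_diam_of_mem isCompact_univ.isBounded (Set.mem_univ _) (Set.mem_univ _)
  · refine diam_le_of_forall_dist_le dist_nonneg fun u _ v _ => ?_
    exact hmax (Set.mem_univ (u, v))

lemma count_lt {q m : ℕ} (hm : m ≤ q) :
    ∑ i : Fin q, (if (i : ℕ) < m then (1 : ℝ) else 0) = m := by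
  rw [Fin.sum_univ_eq_sum_range (fun i => if i < m then (1 : ℝ) else 0) q,
    Finset.sum_boole]
  have : (Finset.range q).filter (fun i => i < m) = Finset.range m := by
    ext i
    simp only [Finset.mem_filter, Finset.mem_range]
    omega
  rw [this, Finset.card_range]

lemma half_diam_le_extent [CompactSpace X] [Nonempty X] {q : ℕ} (hq : 2 ≤ q) :
    diam (Set.univ : Set X) / 2 ≤ extent X q := by
  obtain ⟨a, b, hab⟩ := exists_diam_pair (X := X)
  set D := diam (Set.univ : Set X) with hD
  have hD0 : 0 ≤ D := diam_nonneg
  set m := q / 2 with hm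
  set x : Fin q → X := fun i => if (i : ℕ) < m then a else b with hx
  have hterm : ∀ i j : Fin q,
      (if i < j then dist (x i) (x j) else 0)
        = (if (i : ℕ) < m then (1 : ℝ) else 0) * (if (j : ℕ) < m then (0 : ℝ) else 1) * D := by
    intro i j
    by_cases h1 : (i : ℕ) < m <;> by_cases h2 : (j : ℕ) < m
    · have : dist (x i) (x j) = 0 := by simp [hx, h1, h2]
      by_cases h3 : i < j <;> simp [h1, h2, h3, this]
    · have hij : i < j := by
        rw [Fin.lt_def]; omega
      have : dist (x i) (x j) = D := by
        rw [hx]; simp only [h1, h2, if_true, if_false]; exact hab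
      simp [h1, h2, hij, this]
    · have hij : ¬ i < j := by
        rw [Fin.lt_def]; omega
      simp [h1, h2, hij]
    · have : dist (x i) (x j) = 0 := by simp [hx, h1, h2]
      by_cases h3 : i < j <;> simp [h1, h2, h3, this]
  have hmq : m ≤ q := Nat.div_le_self q 2
  have hnum : (∑ i : Fin q, ∑ j : Fin q, if i < j then dist (x i) (x j) else 0)
      = (m : ℝ) * ((q : ℝ) - m) * D := by
    have : (∑ i : Fin q, ∑ j : Fin q, if i < j then dist (x i) (x j) else 0)
        = (∑ i : Fin q, (if (i : ℕ) < m then (1 : ℝ) else 0))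
            * (∑ j : Fin q, ((if (j : ℕ) < m then (0 : ℝ) else 1) * D)) := by
      rw [Finset.sum_mul_sum]
      refine Finset.sum_congr rfl fun i _ => Finset.sum_congr rfl fun j _ => ?_
      rw [hterm i j]; ring
    rw [this, count_lt hmq]
    have : (∑ j : Fin q, ((if (j : ℕ) < m then (0 : ℝ) else 1) * D))
        = ((q : ℝ) - m) * D := by
      have h1 : ∀ j : Fin q, (if (j : ℕ) < m then (0 : ℝ) else 1) * D
          = (1 - if (j : ℕ) < m then (1 : ℝ) else 0) * D := by
        intro j; by_cases h : (j : ℕ) < m <;> simp [h]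
      rw [Finset.sum_congr rfl fun j _ => h1 j, ← Finset.sum_mul, Finset.sum_sub_distrib,
        count_lt hmq, Finset.sum_const, Finset.card_univ]
      simp
    rw [this]
    ring
  have hkey : D / 2 ≤ avgDist x := by
    unfold avgDist
    rw [hnum, Nat.cast_choose_two]
    have hq2 : (2 : ℝ) ≤ (q : ℝ) := by exact_mod_cast hq
    have hc2 : (0 : ℝ) < (q : ℝ) * ((q : ℝ) - 1) / 2 := by nlinarith
    rw [div_le_div_iff₀ two_pos hc2]
    have hdm : 2 * ((q / 2 : ℕ) : ℝ) + ((q % 2 : ℕ) : ℝ) = (q : ℝ) := by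
      exact_mod_cast congrArg (Nat.cast : ℕ → ℝ) (Nat.div_add_mod q 2)
    have hs0 : (0 : ℝ) ≤ ((q % 2 : ℕ) : ℝ) := Nat.cast_nonneg _
    have hs1 : ((q % 2 : ℕ) : ℝ) ≤ 1 := by
      exact_mod_cast Nat.le_of_lt_succ (Nat.mod_lt q two_pos)
    have hreal : (q : ℝ) * ((q : ℝ) - 1) ≤ 4 * ((m : ℝ) * ((q : ℝ) - m)) := by
      have hmr : (m : ℝ) = ((q / 2 : ℕ) : ℝ) := by rw [hm]
      rw [hmr]
      nlinarith [mul_nonneg hs0 (sub_nonneg.2 hs1)]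
    nlinarith
  refine hkey.trans (le_csSup ?_ ⟨x, rfl⟩)
  exact ⟨D, fun y hy => by obtain ⟨z, rfl⟩ := hy; exact avgDist_le_diam z⟩

end Aux

theorem extent_tendsto (X : Type*) [MetricSpace X] [CompactSpace X] [Nonempty X] :
    ∃ l : ℝ, Filter.Tendsto (fun q : ℕ => extent X q) Filter.atTop (nhds l) ∧
      Metric.diam (Set.univ : Set X) / 2 ≤ l ∧ l ≤ Metric.diam (Set.univ : Set X) := by
  set D := diam (Set.univ : Set X) with hD
  have hbdd : ∀ q : ℕ, BddAbove (Set.range (fun x : Fin q → X => avgDist x)) :=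
    fun q => ⟨D, fun y hy => by obtain ⟨z, rfl⟩ := hy; exact avgDist_le_diam z⟩
  have hne : ∀ q : ℕ, (Set.range (fun x : Fin q → X => avgDist x)).Nonempty :=
    fun q => Set.range_nonempty _
  have hle : ∀ q : ℕ, extent X q ≤ D := fun q =>
    csSup_le (hne q) (fun y hy => by obtain ⟨z, rfl⟩ := hy; exact avgDist_le_diam z)
  have hmono : ∀ q : ℕ, 2 ≤ q → extent X (q + 1) ≤ extent X q := by
    intro q hq
    refine csSup_le (hne _) ?_
    rintro _ ⟨x, rfl⟩
    obtain ⟨k, hk⟩ := exists_remove hq x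
    exact hk.trans (le_csSup (hbdd q) ⟨x ∘ k.succAbove, rfl⟩)
  set g : ℕ → ℝ := fun n => extent X (n + 2) with hg
  have hg_anti : Antitone g :=
    antitone_nat_of_succ_le fun n => hmono (n + 2) (by omega)
  have hg_bdd : BddBelow (Set.range g) :=
    ⟨D / 2, fun y hy => by obtain ⟨n, rfl⟩ := hy; exact half_diam_le_extent (by omega)⟩
  have hg_t : Filter.Tendsto g Filter.atTop (nhds (⨅ n, g n)) :=
    tendsto_atTop_ciInf hg_anti hg_bdd
  refine ⟨⨅ n, g n, ?_, ?_, ?_⟩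
  · exact (Filter.tendsto_add_atTop_iff_nat 2).mp hg_t
  · exact le_ciInf fun n => half_diam_le_extent (by omega)
  · exact (ciInf_le hg_bdd 0).trans (hle 2)
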